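/- Let η := ∑_{k=1}^∞ e^{−k} δ_{1/k} on (0,1], where δ_x denotes the Dirac measure at x. Then β_η(0) = 1/2 and β_η(s) = 0 for every s > 0; consequently, for every b > 0 one has s_b = 0 and β_η(0) ≠ b·s_b (Remark 2.5). -/

import Mathlib

open MeasureTheory Filter
open scoped ENNReal
open scoped Classical

noncomputable section

/-- The half-open dyadic interval `(l/2^n, (l+1)/2^n]`. -/
def dyadicInt (n : ℕ) (l : ℤ) : Set ℝ :=
  Set.Ioc ((l : ℝ) / 2 ^ n) (((l : ℝ) + 1) / 2 ^ n)

/-- `β_n^η(s) = log (∑_{C ∈ 𝒟_n} η(C)^s) / log (2^n)`, the sum running over all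
dyadic intervals of generation `n` with positive `η`-measure. -/
def betaN1 (η : Measure ℝ) (n : ℕ) (s : ℝ) : ℝ :=
  Real.log (∑' l : {l : ℤ // 0 < η (dyadicInt n l)},
      (η (dyadicInt n l.1)).toReal ^ s) / Real.log ((2 : ℝ) ^ n)

/-- The `L^q`-spectrum `β_η(s) = limsup_n β_n^η(s)`. -/
def lqSpectrum1 (η : Measure ℝ) (s : ℝ) : ℝ :=
  limsup (fun n => betaN1 η n s) atTop

/-- `s_b = inf {s > 0 : β_η(s) - b·s ≤ 0}`. -/
def sb1 (η : Measure ℝ) (b : ℝ) : ℝ :=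
  sInf {s : ℝ | 0 < s ∧ lqSpectrum1 η s - b * s ≤ 0}

/-- The measure `η = ∑_{k=1}^∞ e^{-k} δ_{1/k}` on `(0,1]`. -/
def etaMeasure : Measure ℝ :=
  Measure.sum fun k : ℕ =>
    ENNReal.ofReal (Real.exp (-((k : ℝ) + 1))) • Measure.dirac (1 / ((k : ℝ) + 1))

def atomPt (k : ℕ) : ℝ := 1 / ((k : ℝ) + 1)

def wgt (k : ℕ) : ℝ := Real.exp (-((k : ℝ) + 1))

lemma wgt_pos (k : ℕ) : 0 < wgt k := Real.exp_pos _

lemma measurable_dyadic (n : ℕ) (l : ℤ) : MeasurableSet (dyadicInt n l) :=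
  measurableSet_Ioc

lemma eta_apply {A : Set ℝ} (hA : MeasurableSet A) :
    etaMeasure A = ∑' k : ℕ, if atomPt k ∈ A then ENNReal.ofReal (wgt k) else 0 := by
  rw [etaMeasure, Measure.sum_apply _ hA]
  congr 1; funext k
  rw [Measure.smul_apply, Measure.dirac_apply' _ hA, smul_eq_mul]
  unfold atomPt
  by_cases h : (1:ℝ)/((k:ℝ)+1) ∈ A
  · rw [if_pos h, Set.indicator_of_mem h, Pi.one_apply, mul_one]; rfl
  · rw [if_neg h, Set.indicator_of_notMem h, mul_zero]

lemma eta_pos_iff {A : Set ℝ} (hA : MeasurableSet A) :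
    0 < etaMeasure A ↔ ∃ k : ℕ, atomPt k ∈ A := by
  rw [eta_apply hA]
  constructor
  · intro h
    by_contra hc
    push_neg at hc
    simp only [hc, if_false] at h
    simp at h
  · rintro ⟨k, hk⟩
    refine lt_of_lt_of_le ?_ (ENNReal.le_tsum k)
    simp only [hk, if_true]
    exact ENNReal.ofReal_pos.mpr (wgt_pos k)

lemma wgt_le (k : ℕ) : wgt k ≤ (1/2 : ℝ)^(k+1) := by
  have h2 : Real.exp (-((k:ℝ)+1)) = (Real.exp (-1))^(k+1) := by
    rw [← Real.exp_nat_mul]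
    push_cast
    ring_nf
  rw [wgt, h2]
  apply pow_le_pow_left₀ (le_of_lt (Real.exp_pos _))
  rw [Real.exp_neg, inv_le_comm₀ (Real.exp_pos _) (by norm_num)]
  calc (1/2:ℝ)⁻¹ = 2 := by norm_num
  _ ≤ Real.exp 1 := by linarith [Real.add_one_le_exp (1:ℝ)]

lemma half_pow_summable : Summable (fun k : ℕ => (1/2:ℝ)^(k+1)) :=
  Summable.comp_injective (summable_geometric_of_lt_one (by norm_num) (by norm_num))
    (add_left_injective 1)

lemma tsum_half_pow : ∑' k : ℕ, (1/2:ℝ)^(k+1) = 1 := by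
  have h := tsum_geometric_of_lt_one (show (0:ℝ) ≤ 1/2 by norm_num) (by norm_num)
  have h0 := Summable.sum_add_tsum_nat_add (f := fun k : ℕ => (1/2:ℝ)^k) 1
    (summable_geometric_of_lt_one (by norm_num) (by norm_num))
  simp only [Finset.range_one, Finset.sum_singleton, pow_zero] at h0
  have : (1:ℝ) + ∑' (i : ℕ), (1/2:ℝ) ^ (i + 1) = 2 := by
    rw [h0, h]; norm_num
  linarith

lemma wgt_summable : Summable wgt :=
  Summable.of_nonneg_of_le (fun k => (wgt_pos k).le) wgt_le half_pow_summable

set_option maxHeartbeats 1000000 in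
lemma eta_le_of_min {A : Set ℝ} (hA : MeasurableSet A) (k : ℕ)
    (h : ∀ j : ℕ, atomPt j ∈ A → k ≤ j) :
    etaMeasure A ≤ ENNReal.ofReal ((1/2 : ℝ)^k) := by
  rw [eta_apply hA]
  have step1 : ∑' j : ℕ, (if atomPt j ∈ A then ENNReal.ofReal (wgt j) else 0)
      ≤ ∑' j : ℕ, (if k ≤ j then ENNReal.ofReal ((1/2:ℝ)^(j+1)) else 0) := by
    apply ENNReal.tsum_le_tsum
    intro j
    by_cases hj : atomPt j ∈ A
    · rw [if_pos hj, if_pos (h j hj)]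
      exact ENNReal.ofReal_le_ofReal (wgt_le j)
    · simp [hj]
  refine step1.trans ?_
  set g : ℕ → ℝ≥0∞ := fun j => if k ≤ j then ENNReal.ofReal ((1/2:ℝ)^(j+1)) else 0 with hg
  have h0 : ∑ i ∈ Finset.range k, g i = 0 := by
    apply Finset.sum_eq_zero
    intro i hi
    simp only [hg]
    rw [if_neg (Nat.not_le.mpr (Finset.mem_range.mp hi))]
  have hsplit := Summable.sum_add_tsum_nat_add' (f := g) (k := k) ENNReal.summable
  have h1 : ∑' j : ℕ, g j = ∑' i : ℕ, ENNReal.ofReal ((1/2:ℝ)^(i+k+1)) := by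
    rw [← hsplit, h0, zero_add]
    congr 1; funext i
    simp only [hg]
    rw [if_pos (Nat.le_add_left k i)]
  have hsum : Summable (fun i : ℕ => (1/2:ℝ)^(i+k+1)) := by
    apply Summable.of_nonneg_of_le (fun i => by positivity) (fun i => ?_)
      (summable_geometric_of_lt_one (show (0:ℝ) ≤ 1/2 by norm_num) (by norm_num))
    exact pow_le_pow_of_le_one (by norm_num) (by norm_num) (by omega)
  rw [h1, ← ENNReal.ofReal_tsum_of_nonneg (fun i => by positivity) hsum]
  apply ENNReal.ofReal_le_ofReal
  have hterm : ∀ i : ℕ, (1/2:ℝ)^(i+k+1) = (1/2:ℝ)^k * (1/2:ℝ)^(i+1) := by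
    intro i; rw [← pow_add]; congr 1; omega
  have heq : (∑' i : ℕ, (1/2:ℝ)^(i+k+1)) = (1/2:ℝ)^k := by
    calc ∑' i : ℕ, (1/2:ℝ)^(i+k+1) = ∑' i : ℕ, (1/2:ℝ)^k * (1/2:ℝ)^(i+1) := by
          congr 1; funext i; exact hterm i
    _ = (1/2:ℝ)^k * ∑' i : ℕ, (1/2:ℝ)^(i+1) := tsum_mul_left
    _ = (1/2:ℝ)^k := by rw [tsum_half_pow, mul_one]
  exact le_of_eq heq

lemma eta_le_one {A : Set ℝ} (hA : MeasurableSet A) : etaMeasure A ≤ 1 := by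
  have := eta_le_of_min hA 0 (fun j _ => Nat.zero_le j)
  simpa using this

lemma eta_dyadic_ne_top (n : ℕ) (l : ℤ) : etaMeasure (dyadicInt n l) ≠ ⊤ :=
  fun h => by simpa [h] using eta_le_one (measurable_dyadic n l)
lemma mem_dyadic_iff {n : ℕ} {l : ℤ} {x : ℝ} :
    x ∈ dyadicInt n l ↔ (l : ℝ) < x * 2^n ∧ x * 2^n ≤ (l:ℝ) + 1 := by
  have h2 : (0:ℝ) < 2^n := by positivity
  simp only [dyadicInt, Set.mem_Ioc, div_lt_iff₀ h2, le_div_iff₀ h2]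

lemma dyadic_unique {n : ℕ} {l1 l2 : ℤ} {x : ℝ}
    (h1 : x ∈ dyadicInt n l1) (h2 : x ∈ dyadicInt n l2) : l1 = l2 := by
  rw [mem_dyadic_iff] at h1 h2
  have a1 : (l1:ℝ) < (l2:ℝ)+1 := lt_of_lt_of_le h1.1 h2.2
  have a2 : (l2:ℝ) < (l1:ℝ)+1 := lt_of_lt_of_le h2.1 h1.2
  have b1 : l1 < l2+1 := by exact_mod_cast a1
  have b2 : l2 < l1+1 := by exact_mod_cast a2
  omega

lemma atomPt_pos (k : ℕ) : 0 < atomPt k := by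
  rw [atomPt]; positivity

lemma atomPt_le_one (k : ℕ) : atomPt k ≤ 1 := by
  rw [atomPt, div_le_one (by positivity)]
  linarith [Nat.cast_nonneg (α := ℝ) k]

lemma lmem_bounds {n : ℕ} {l : ℤ} (h : 0 < etaMeasure (dyadicInt n l)) :
    0 ≤ l ∧ l < 2^n := by
  obtain ⟨k, hk⟩ := (eta_pos_iff (measurable_dyadic n l)).mp h
  rw [mem_dyadic_iff] at hk
  have h2 : (0:ℝ) < 2^n := by positivity
  have hx0 := atomPt_pos k
  have hx1 := atomPt_le_one k
  have c1 : (l:ℝ) < 2^n := lt_of_lt_of_le hk.1 (by nlinarith)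
  have c2 : (0:ℝ) < (l:ℝ) + 1 := lt_of_lt_of_le (by nlinarith) hk.2
  constructor
  · have : (0:ℤ) < l + 1 := by exact_mod_cast c2
    omega
  · have : (l:ℝ) < ((2^n : ℤ) : ℝ) := by push_cast; exact c1
    exact_mod_cast this

lemma Dfin (n : ℕ) : Set.Finite {l : ℤ | 0 < etaMeasure (dyadicInt n l)} := by
  apply Set.Finite.subset (Set.finite_Ico (0:ℤ) (2^n))
  intro l hl
  have := lmem_bounds hl
  simp [Set.mem_Ico, this.1, this.2]

def DFinset (n : ℕ) : Finset ℤ := (Dfin n).toFinset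

lemma mem_DFinset {n : ℕ} {l : ℤ} : l ∈ DFinset n ↔ 0 < etaMeasure (dyadicInt n l) := by
  rw [DFinset, Set.Finite.mem_toFinset]; rfl

def kmin (n : ℕ) (l : ℤ) : ℕ :=
  if h : ∃ k : ℕ, atomPt k ∈ dyadicInt n l then Nat.find h else 0

lemma kmin_mem {n : ℕ} {l : ℤ} (h : 0 < etaMeasure (dyadicInt n l)) :
    atomPt (kmin n l) ∈ dyadicInt n l := by
  have hex := (eta_pos_iff (measurable_dyadic n l)).mp h
  rw [kmin, dif_pos hex]
  exact Nat.find_spec hex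

lemma kmin_min {n : ℕ} {l : ℤ} {j : ℕ} (hj : atomPt j ∈ dyadicInt n l) :
    kmin n l ≤ j := by
  have hex : ∃ k : ℕ, atomPt k ∈ dyadicInt n l := ⟨j, hj⟩
  rw [kmin, dif_pos hex]
  exact Nat.find_min' hex hj

lemma kmin_injOn (n : ℕ) : Set.InjOn (kmin n) {l | 0 < etaMeasure (dyadicInt n l)} := by
  intro l1 h1 l2 h2 heq
  exact dyadic_unique (kmin_mem h1) (heq ▸ kmin_mem h2)

lemma eta_dyadic_le_kmin (n : ℕ) (l : ℤ) :
    etaMeasure (dyadicInt n l) ≤ ENNReal.ofReal ((1/2 : ℝ)^(kmin n l)) :=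
  eta_le_of_min (measurable_dyadic n l) _ (fun j hj => kmin_min hj)

lemma tsum_subtype_eq_sum {p : ℤ → Prop} (hf : Set.Finite {l | p l}) (F : ℤ → ℝ) :
    (∑' l : {l : ℤ // p l}, F l.1) = ∑ l ∈ hf.toFinset, F l := by
  have h1 : (∑' l : {l : ℤ // p l}, F l.1) = ∑' x : ℤ, Set.indicator {l | p l} F x :=
    tsum_subtype {l | p l} F
  rw [h1]
  rw [tsum_eq_sum (s := hf.toFinset)
    (fun b hb => Set.indicator_of_notMem (by simpa using hb) F)]
  exact Finset.sum_congr rfl (fun l hl => Set.indicator_of_mem (by simpa using hl) F)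
lemma pow_half_mul (n : ℕ) : (2:ℝ)^(n - n/2) * (2:ℝ)^(n/2) = (2:ℝ)^n := by
  rw [← pow_add]
  congr 1
  omega

lemma lower_atom {n : ℕ} {j : ℕ} (hj : j < 2^(n/2)) :
    0 < etaMeasure (dyadicInt n (j:ℤ)) := by
  rw [eta_pos_iff (measurable_dyadic n _)]
  have hpos : (0:ℝ) < 2^n := by positivity
  have hj1 : (0:ℝ) < (j:ℝ)+1 := by positivity
  have harg : (0:ℝ) < 2^n/((j:ℝ)+1) := by positivity
  set m : ℕ := ⌈(2:ℝ)^n/((j:ℝ)+1)⌉₊ with hm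
  have hm1 : 1 ≤ m := Nat.one_le_ceil_iff.mpr harg
  have hmpos : (0:ℝ) < m := by exact_mod_cast hm1
  have hle : (2:ℝ)^n/((j:ℝ)+1) ≤ m := Nat.le_ceil _
  have hlt : (m:ℝ) < 2^n/((j:ℝ)+1) + 1 := Nat.ceil_lt_add_one harg.le
  -- the key arithmetic fact : j*(j+1) < 2^n
  have hkey : (j:ℝ) * ((j:ℝ)+1) < 2^n := by
    have h1 : (j+1 : ℕ) ≤ 2^(n/2) := hj
    have h2 : (j:ℝ)+1 ≤ (2:ℝ)^(n/2) := by exact_mod_cast h1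
    have h3 : (2:ℝ)^(n/2) * (2:ℝ)^(n/2) ≤ 2^n := by
      rw [← pow_add]
      apply pow_le_pow_right₀ (by norm_num)
      omega
    nlinarith [Nat.cast_nonneg (α := ℝ) j]
  refine ⟨m - 1, ?_⟩
  rw [mem_dyadic_iff]
  have hatom : atomPt (m-1) = 1/(m:ℝ) := by
    rw [atomPt]
    congr 1
    have : ((m-1:ℕ):ℝ) = (m:ℝ) - 1 := by
      push_cast [Nat.cast_sub hm1]; ring
    rw [this]; ring
  rw [hatom]
  push_cast
  constructor
  · -- j < (1/m) * 2^n  ⟺  j * m < 2^n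
    rw [div_mul_eq_mul_div, one_mul, lt_div_iff₀ hmpos]
    -- j * m ≤ j * (2^n/(j+1) + 1) and j*(2^n/(j+1)+1) < 2^n using hkey
    have hj0 : (0:ℝ) ≤ (j:ℝ) := Nat.cast_nonneg j
    have h4 : (j:ℝ) * (m:ℝ) < (j:ℝ) * (2^n/((j:ℝ)+1) + 1) + (if j = 0 then 1 else 0) := by
      by_cases hj' : j = 0
      · norm_num [hj']
      · have : (0:ℝ) < j := by
          have : 1 ≤ j := Nat.one_le_iff_ne_zero.mpr hj'
          exact_mod_cast this
        simp [hj']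
        nlinarith
    have h5 : (j:ℝ) * (2^n/((j:ℝ)+1) + 1) + (if j = 0 then 1 else 0) ≤ 2^n := by
      by_cases hj' : j = 0
      · simp [hj']
        have : (1:ℕ) ≤ 2^n := Nat.one_le_two_pow
        exact_mod_cast this
      · simp [hj']
        have hd : (j:ℝ) * (2^n/((j:ℝ)+1)) = (j:ℝ) * 2^n / ((j:ℝ)+1) := by ring
        rw [mul_add, hd, mul_one]
        rw [div_add' _ _ _ (ne_of_gt hj1), div_le_iff₀ hj1]
        nlinarith
    linarith
  · -- (1/m) * 2^n ≤ j + 1  ⟺  2^n ≤ (j+1) * m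
    rw [div_mul_eq_mul_div, one_mul, div_le_iff₀ hmpos]
    calc (2:ℝ)^n = (2^n/((j:ℝ)+1)) * ((j:ℝ)+1) := by field_simp
    _ ≤ (m:ℝ) * ((j:ℝ)+1) := by nlinarith
    _ = ((j:ℝ)+1) * m := by ring

lemma card_lower (n : ℕ) : 2^(n/2) ≤ (DFinset n).card := by
  have : (Finset.range (2^(n/2))).card ≤ (DFinset n).card := by
    apply Finset.card_le_card_of_injOn (fun j : ℕ => (j:ℤ))
    · intro j hj
      rw [Finset.mem_coe, mem_DFinset]
      exact lower_atom (Finset.mem_range.mp hj)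
    · intro a _ b _ hab
      simp only at hab
      exact_mod_cast hab
  simpa using this
lemma kmin_small {n : ℕ} {l : ℤ} (hl : 0 < etaMeasure (dyadicInt n l))
    (hbig : (2:ℤ)^(n - n/2) ≤ l) : kmin n l < 2^(n/2) := by
  have hmem := kmin_mem hl
  rw [mem_dyadic_iff] at hmem
  set k := kmin n l
  have h1 : (l:ℝ) < atomPt k * 2^n := hmem.1
  have h2 : ((2:ℝ))^(n - n/2) ≤ (l:ℝ) := by exact_mod_cast hbig
  have h3 : (2:ℝ)^(n - n/2) < (1/((k:ℝ)+1)) * 2^n := by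
    rw [← atomPt] at *
    linarith
  have hk1 : (0:ℝ) < (k:ℝ)+1 := by positivity
  have h4 : ((k:ℝ)+1) * (2:ℝ)^(n - n/2) < 2^n := by
    rw [div_mul_eq_mul_div, one_mul, lt_div_iff₀ hk1] at h3
    linarith [h3]
  have h5 : ((k:ℝ)+1) * (2:ℝ)^(n - n/2) < (2:ℝ)^(n/2) * (2:ℝ)^(n - n/2) := by
    rw [← pow_half_mul n] at h4
    linarith [h4]
  have h6 : (k:ℝ)+1 < (2:ℝ)^(n/2) :=
    lt_of_mul_lt_mul_right h5 (by positivity)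
  have h7 : (k+1 : ℕ) < 2^(n/2) := by exact_mod_cast h6
  omega

lemma card_upper (n : ℕ) : (DFinset n).card ≤ 2^(n - n/2) + 2^(n/2) := by
  classical
  set B : ℤ := 2^(n - n/2) with hB
  have hsplit : (DFinset n).card =
      ((DFinset n).filter (fun l => l < B)).card +
      ((DFinset n).filter (fun l => ¬ l < B)).card :=
    (Finset.card_filter_add_card_filter_not _).symm
  have hc1 : ((DFinset n).filter (fun l => l < B)).card ≤ 2^(n - n/2) := by
    have hsub : (DFinset n).filter (fun l => l < B) ⊆ Finset.Ico (0:ℤ) B := by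
      intro l hl
      rw [Finset.mem_filter] at hl
      rw [Finset.mem_Ico]
      exact ⟨(lmem_bounds (mem_DFinset.mp hl.1)).1, hl.2⟩
    have := Finset.card_le_card hsub
    rw [Int.card_Ico] at this
    calc ((DFinset n).filter (fun l => l < B)).card ≤ (B - 0).toNat := this
    _ = 2^(n - n/2) := by
      rw [hB, sub_zero]
      have h : ((2:ℤ)^(n - n/2)) = ((2^(n-n/2) : ℕ) : ℤ) := by push_cast; ring
      rw [h, Int.toNat_natCast]
  have hc2 : ((DFinset n).filter (fun l => ¬ l < B)).card ≤ 2^(n/2) := by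
    have : ((DFinset n).filter (fun l => ¬ l < B)).card ≤ (Finset.range (2^(n/2))).card := by
      apply Finset.card_le_card_of_injOn (kmin n)
      · intro l hl
        rw [Finset.mem_coe, Finset.mem_filter] at hl
        rw [Finset.mem_coe, Finset.mem_range]
        exact kmin_small (mem_DFinset.mp hl.1) (not_lt.mp hl.2)
      · intro a ha b hb hab
        rw [Finset.coe_filter] at ha hb
        exact kmin_injOn n (mem_DFinset.mp ha.1) (mem_DFinset.mp hb.1) hab
    simpa using this
  omega
def Ssum (n : ℕ) (s : ℝ) : ℝ := ∑ l ∈ DFinset n, (etaMeasure (dyadicInt n l)).toReal ^ s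

lemma betaN1_eta (n : ℕ) (s : ℝ) :
    betaN1 etaMeasure n s = Real.log (Ssum n s) / Real.log ((2:ℝ)^n) := by
  rw [betaN1, Ssum]
  rw [tsum_subtype_eq_sum (Dfin n) (fun l => (etaMeasure (dyadicInt n l)).toReal ^ s)]
  rfl

lemma Ssum_zero (n : ℕ) : Ssum n 0 = ((DFinset n).card : ℝ) := by
  rw [Ssum]
  rw [Finset.sum_congr rfl (fun l _ => Real.rpow_zero _)]
  simp

lemma Ssum_le {n : ℕ} {s : ℝ} (hs : 0 < s) :
    Ssum n s ≤ (1 - (1/2:ℝ)^s)⁻¹ := by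
  set r : ℝ := (1/2:ℝ)^s with hr
  have hr0 : 0 ≤ r := Real.rpow_nonneg (by norm_num) s
  have hr1 : r < 1 := Real.rpow_lt_one (by norm_num) (by norm_num) hs
  have hterm : ∀ l ∈ DFinset n, (etaMeasure (dyadicInt n l)).toReal ^ s ≤ r ^ (kmin n l) := by
    intro l _
    have h1 : (etaMeasure (dyadicInt n l)).toReal ≤ (1/2:ℝ)^(kmin n l) :=
      ENNReal.toReal_le_of_le_ofReal (by positivity) (eta_dyadic_le_kmin n l)
    have h2 : ((etaMeasure (dyadicInt n l)).toReal) ^ s ≤ ((1/2:ℝ)^(kmin n l)) ^ s :=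
      Real.rpow_le_rpow ENNReal.toReal_nonneg h1 hs.le
    refine h2.trans (le_of_eq ?_)
    rw [← Real.rpow_natCast (1/2:ℝ) (kmin n l), ← Real.rpow_mul (by norm_num), mul_comm,
      Real.rpow_mul (by norm_num), Real.rpow_natCast]
  have step1 : Ssum n s ≤ ∑ l ∈ DFinset n, r ^ (kmin n l) := Finset.sum_le_sum hterm
  have hinj : ∀ x ∈ DFinset n, ∀ y ∈ DFinset n, kmin n x = kmin n y → x = y := by
    intro x hx y hy hxy
    exact kmin_injOn n (mem_DFinset.mp hx) (mem_DFinset.mp hy) hxy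
  have step2 : ∑ l ∈ DFinset n, r ^ (kmin n l) = ∑ k ∈ (DFinset n).image (kmin n), r ^ k :=
    (Finset.sum_image hinj).symm
  have step3 : ∑ k ∈ (DFinset n).image (kmin n), r ^ k ≤ ∑' k : ℕ, r ^ k :=
    Summable.sum_le_tsum _ (fun i _ => pow_nonneg hr0 i) (summable_geometric_of_lt_one hr0 hr1)
  rw [tsum_geometric_of_lt_one hr0 hr1] at step3
  linarith

lemma atom0_mem (n : ℕ) : atomPt 0 ∈ dyadicInt n ((2:ℤ)^n - 1) := by
  rw [mem_dyadic_iff]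
  have h : atomPt 0 = 1 := by norm_num [atomPt]
  rw [h]
  push_cast
  constructor <;> norm_num

lemma eta_ge (n : ℕ) :
    ENNReal.ofReal (Real.exp (-1)) ≤ etaMeasure (dyadicInt n ((2:ℤ)^n - 1)) := by
  rw [eta_apply (measurable_dyadic n _)]
  refine le_trans ?_ (ENNReal.le_tsum 0)
  rw [if_pos (atom0_mem n)]
  apply ENNReal.ofReal_le_ofReal
  rw [wgt]
  norm_num

lemma top_mem_DFinset (n : ℕ) : ((2:ℤ)^n - 1) ∈ DFinset n := by
  rw [mem_DFinset]
  exact lt_of_lt_of_le (by simp [Real.exp_pos]) (eta_ge n)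

lemma Ssum_ge {n : ℕ} {s : ℝ} (hs0 : 0 ≤ s) : Real.exp (-s) ≤ Ssum n s := by
  have h1 : Real.exp (-1) ≤ (etaMeasure (dyadicInt n ((2:ℤ)^n - 1))).toReal := by
    have := ENNReal.toReal_mono (eta_dyadic_ne_top n _) (eta_ge n)
    rwa [ENNReal.toReal_ofReal (Real.exp_pos _).le] at this
  have h2 : Real.exp (-s) ≤ (etaMeasure (dyadicInt n ((2:ℤ)^n - 1))).toReal ^ s := by
    have h3 := Real.rpow_le_rpow (Real.exp_pos (-1)).le h1 hs0
    refine le_trans (le_of_eq ?_) h3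
    rw [Real.rpow_def_of_pos (Real.exp_pos _), Real.log_exp]
    ring_nf
  refine h2.trans ?_
  rw [Ssum]
  exact Finset.single_le_sum (f := fun l => (etaMeasure (dyadicInt n l)).toReal ^ s)
    (fun l _ => Real.rpow_nonneg ENNReal.toReal_nonneg s) (top_mem_DFinset n)
lemma log2_pos : (0:ℝ) < Real.log 2 := Real.log_pos (by norm_num)

lemma card_pos_real (n : ℕ) : (1:ℝ) ≤ ((DFinset n).card : ℝ) := by
  have h := card_lower n
  have h1 : (1:ℕ) ≤ (DFinset n).card := le_trans Nat.one_le_two_pow h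
  exact_mod_cast h1

lemma beta_zero_lower {n : ℕ} (hn : 1 ≤ n) :
    1/2 - 2/(n:ℝ) ≤ betaN1 etaMeasure n 0 := by
  rw [betaN1_eta, Ssum_zero, Real.log_pow]
  have hnR : (0:ℝ) < (n:ℝ) := by exact_mod_cast hn
  have hden : (0:ℝ) < (n:ℝ) * Real.log 2 := by positivity
  rw [le_div_iff₀ hden]
  have hcard : ((2:ℝ))^(n/2) ≤ ((DFinset n).card : ℝ) := by
    have := card_lower n
    exact_mod_cast this
  have hlog : ((n/2 : ℕ) : ℝ) * Real.log 2 ≤ Real.log ((DFinset n).card : ℝ) := by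
    calc ((n/2 : ℕ) : ℝ) * Real.log 2 = Real.log ((2:ℝ)^(n/2)) := (Real.log_pow _ _).symm
    _ ≤ _ := Real.log_le_log (by positivity) hcard
  have hnat : (n:ℝ) - 1 ≤ 2 * ((n/2 : ℕ) : ℝ) := by
    have : n ≤ 2 * (n/2) + 1 := by omega
    have h2 : (n:ℝ) ≤ 2 * ((n/2:ℕ):ℝ) + 1 := by exact_mod_cast this
    linarith
  have hid : (1/2 - 2/(n:ℝ)) * ((n:ℝ) * Real.log 2) = ((n:ℝ)/2 - 2) * Real.log 2 := by
    field_simp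
  rw [hid]
  refine le_trans ?_ hlog
  apply mul_le_mul_of_nonneg_right ?_ log2_pos.le
  linarith

lemma beta_zero_upper {n : ℕ} (hn : 1 ≤ n) :
    betaN1 etaMeasure n 0 ≤ 1/2 + 2/(n:ℝ) := by
  rw [betaN1_eta, Ssum_zero, Real.log_pow]
  have hnR : (0:ℝ) < (n:ℝ) := by exact_mod_cast hn
  have hden : (0:ℝ) < (n:ℝ) * Real.log 2 := by positivity
  rw [div_le_iff₀ hden]
  have hcard : ((DFinset n).card : ℝ) ≤ (2:ℝ)^(n - n/2 + 1) := by
    have h1 : (DFinset n).card ≤ 2^(n - n/2) + 2^(n/2) := card_upper n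
    have h2 : 2^(n - n/2) + 2^(n/2) ≤ 2^(n - n/2 + 1) := by
      have : (2:ℕ)^(n/2) ≤ 2^(n - n/2) := Nat.pow_le_pow_right (by norm_num) (by omega)
      rw [pow_succ]
      omega
    exact_mod_cast le_trans h1 h2
  have hlog : Real.log ((DFinset n).card : ℝ) ≤ ((n - n/2 + 1 : ℕ) : ℝ) * Real.log 2 := by
    calc Real.log ((DFinset n).card : ℝ) ≤ Real.log ((2:ℝ)^(n - n/2 + 1)) :=
      Real.log_le_log (by linarith [card_pos_real n]) hcard
    _ = _ := Real.log_pow _ _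
  have hnat : 2 * ((n - n/2 + 1 : ℕ) : ℝ) ≤ (n:ℝ) + 4 := by
    have : 2 * (n - n/2 + 1) ≤ n + 4 := by omega
    exact_mod_cast this
  have hid : (1/2 + 2/(n:ℝ)) * ((n:ℝ) * Real.log 2) = ((n:ℝ)/2 + 2) * Real.log 2 := by
    field_simp
  rw [hid]
  refine le_trans hlog ?_
  apply mul_le_mul_of_nonneg_right ?_ log2_pos.le
  linarith

lemma tendsto_half_sub : Tendsto (fun n : ℕ => 1/2 - 2/(n:ℝ)) atTop (nhds (1/2)) := by
  have := (tendsto_const_nhds (x := (1/2:ℝ)) (f := atTop (α := ℕ))).sub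
    (tendsto_const_div_atTop_nhds_zero_nat 2)
  simpa using this

lemma tendsto_half_add : Tendsto (fun n : ℕ => 1/2 + 2/(n:ℝ)) atTop (nhds (1/2)) := by
  have := (tendsto_const_nhds (x := (1/2:ℝ)) (f := atTop (α := ℕ))).add
    (tendsto_const_div_atTop_nhds_zero_nat 2)
  simpa using this

lemma lq_zero : lqSpectrum1 etaMeasure 0 = 1/2 := by
  apply Filter.Tendsto.limsup_eq
  apply tendsto_of_tendsto_of_tendsto_of_le_of_le' tendsto_half_sub tendsto_half_add
  · filter_upwards [eventually_ge_atTop 1] with n hn using beta_zero_lower hn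
  · filter_upwards [eventually_ge_atTop 1] with n hn using beta_zero_upper hn

lemma beta_pos_bounds {s : ℝ} (hs : 0 < s) {n : ℕ} (hn : 1 ≤ n) :
    (-s/Real.log 2)/(n:ℝ) ≤ betaN1 etaMeasure n s ∧
    betaN1 etaMeasure n s ≤ (Real.log ((1 - (1/2:ℝ)^s)⁻¹)/Real.log 2)/(n:ℝ) := by
  have hnR : (0:ℝ) < (n:ℝ) := by exact_mod_cast hn
  have hS0 : (0:ℝ) < Ssum n s := lt_of_lt_of_le (Real.exp_pos _) (Ssum_ge hs.le)
  have hlog1 : -s ≤ Real.log (Ssum n s) := by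
    have := Real.log_le_log (Real.exp_pos _) (Ssum_ge (n := n) hs.le)
    rwa [Real.log_exp] at this
  have hlog2 : Real.log (Ssum n s) ≤ Real.log ((1 - (1/2:ℝ)^s)⁻¹) :=
    Real.log_le_log hS0 (Ssum_le hs)
  have hrw : betaN1 etaMeasure n s = (Real.log (Ssum n s)/Real.log 2)/(n:ℝ) := by
    rw [betaN1_eta, Real.log_pow]
    ring
  rw [hrw]
  constructor
  · apply div_le_div_of_nonneg_right ((div_le_div_iff_of_pos_right log2_pos).mpr hlog1) hnR.le
  · apply div_le_div_of_nonneg_right ((div_le_div_iff_of_pos_right log2_pos).mpr hlog2) hnR.le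

lemma lq_pos {s : ℝ} (hs : 0 < s) : lqSpectrum1 etaMeasure s = 0 := by
  apply Filter.Tendsto.limsup_eq
  have t1 : Tendsto (fun n : ℕ => (-s/Real.log 2)/(n:ℝ)) atTop (nhds 0) :=
    tendsto_const_div_atTop_nhds_zero_nat _
  have t2 : Tendsto (fun n : ℕ => (Real.log ((1 - (1/2:ℝ)^s)⁻¹)/Real.log 2)/(n:ℝ))
      atTop (nhds 0) := tendsto_const_div_atTop_nhds_zero_nat _
  apply tendsto_of_tendsto_of_tendsto_of_le_of_le' t1 t2
  · filter_upwards [eventually_ge_atTop 1] with n hn using (beta_pos_bounds hs hn).1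
  · filter_upwards [eventually_ge_atTop 1] with n hn using (beta_pos_bounds hs hn).2


/-- **Remark 2.5**: for `η = ∑_k e^{-k} δ_{1/k}` one has `β_η(0) = 1/2` and
`β_η(s) = 0` for all `s > 0`; consequently `s_b = 0` and `β_η(0) ≠ b·s_b` for every
`b > 0`. -/
theorem statement6 :
    lqSpectrum1 etaMeasure 0 = 1 / 2 ∧
    (∀ s : ℝ, 0 < s → lqSpectrum1 etaMeasure s = 0) ∧
    ∀ b : ℝ, 0 < b →
      sb1 etaMeasure b = 0 ∧ lqSpectrum1 etaMeasure 0 ≠ b * sb1 etaMeasure b := by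
  refine ⟨lq_zero, fun s hs => lq_pos hs, fun b hb => ?_⟩
  have hset : {s : ℝ | 0 < s ∧ lqSpectrum1 etaMeasure s - b * s ≤ 0} = Set.Ioi 0 := by
    ext s
    simp only [Set.mem_setOf_eq, Set.mem_Ioi]
    constructor
    · exact fun h => h.1
    · intro hs
      refine ⟨hs, ?_⟩
      rw [lq_pos hs]
      nlinarith
  have hsb : sb1 etaMeasure b = 0 := by rw [sb1, hset]; exact csInf_Ioi
  refine ⟨hsb, ?_⟩
  rw [lq_zero, hsb, mul_zero]
  norm_num
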